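/- Let g ∈ ℚ[t] be a polynomial with deg g ≥ 1 and let t denote the identity polynomial X. Then t·g divides t⁴ − 4g² + 4 in ℚ[t] if and only if g = (1/2)(t² + 2t + 2), or g = −(1/2)(t² + 2t + 2), or g = (1/2)(t² − 2t + 2), or g = −(1/2)(t² − 2t + 2), or g = (1/4)(t⁴ + 4), or g = −(1/4)(t⁴ + 4). -/

import Mathlib

open Polynomial

private lemma irred_quad (b : ℚ) (hb : b ^ 2 < 8) :
    Irreducible (X ^ 2 + C b * X + 2 : ℚ[X]) := by
  have hd : (X ^ 2 + C b * X + 2 : ℚ[X]).natDegree = 2 := by compute_degree!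
  rw [irreducible_iff_roots_eq_zero_of_degree_le_three (by omega) (by omega)]
  rw [Multiset.eq_zero_iff_forall_notMem]
  intro r hr
  have h0 : (X ^ 2 + C b * X + 2 : ℚ[X]) ≠ 0 := by
    intro h; rw [h] at hd; simp at hd
  rw [mem_roots h0] at hr
  have := hr
  simp [IsRoot, eval_add, eval_mul, eval_pow] at this
  nlinarith [sq_nonneg (2 * r + b), this]

private lemma key (g : ℚ[X]) :
    X * g ∣ X ^ 4 - 4 * g ^ 2 + 4 ↔ (g ∣ X ^ 4 + 4 ∧ (eval 0 g) ^ 2 = 1) := by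
  constructor
  · intro h
    have hXd : X ∣ X ^ 4 - 4 * g ^ 2 + 4 := (dvd_mul_right X g).trans h
    have hgd : g ∣ X ^ 4 - 4 * g ^ 2 + 4 := (dvd_mul_left g X).trans h
    have hc : (eval 0 g) ^ 2 = 1 := by
      have h0 := X_dvd_iff.mp hXd
      rw [coeff_zero_eq_eval_zero] at h0
      simp at h0
      linarith
    refine ⟨?_, hc⟩
    have : (X ^ 4 + 4 : ℚ[X]) = (X ^ 4 - 4 * g ^ 2 + 4) + 4 * g ^ 2 := by ring
    rw [this]
    exact dvd_add hgd ⟨4 * g, by ring⟩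
  · rintro ⟨hd, hc⟩
    have hgd : g ∣ X ^ 4 - 4 * g ^ 2 + 4 := by
      have : (X ^ 4 - 4 * g ^ 2 + 4 : ℚ[X]) = (X ^ 4 + 4) - 4 * g ^ 2 := by ring
      rw [this]
      exact dvd_sub hd ⟨4 * g, by ring⟩
    have hXd : X ∣ X ^ 4 - 4 * g ^ 2 + 4 := by
      rw [X_dvd_iff, coeff_zero_eq_eval_zero]
      simp
      linarith
    have hXg : ¬ X ∣ g := by
      intro hdvd
      have h0 := X_dvd_iff.mp hdvd
      rw [coeff_zero_eq_eval_zero] at h0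
      rw [h0] at hc; norm_num at hc
    have hcop : IsCoprime (X : ℚ[X]) g := (irreducible_X.isCoprime_or_dvd g).resolve_right hXg
    exact hcop.mul_dvd hXd hgd

private lemma assoc_case {g p : ℚ[X]} (h1 : g ∣ p) (h2 : p ∣ g) :
    ∃ r : ℚ, r ≠ 0 ∧ g = C r * p := by
  obtain ⟨u, hu⟩ := associated_of_dvd_dvd h2 h1
  obtain ⟨r, hru, hCr⟩ := Polynomial.isUnit_iff.mp u.isUnit
  exact ⟨r, hru.ne_zero, by rw [← hu, ← hCr]; ring⟩

theorem quartic_congruence_deg1 (g : ℚ[X]) (hg : 1 ≤ g.natDegree) :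
    X * g ∣ X ^ 4 - 4 * g ^ 2 + 4 ↔
      g = C (1/2 : ℚ) * (X ^ 2 + 2 * X + 2) ∨
      g = -(C (1/2 : ℚ) * (X ^ 2 + 2 * X + 2)) ∨
      g = C (1/2 : ℚ) * (X ^ 2 - 2 * X + 2) ∨
      g = -(C (1/2 : ℚ) * (X ^ 2 - 2 * X + 2)) ∨
      g = C (1/4 : ℚ) * (X ^ 4 + 4) ∨
      g = -(C (1/4 : ℚ) * (X ^ 4 + 4)) := by
  rw [key g]
  have hA : Irreducible (X ^ 2 + 2 * X + 2 : ℚ[X]) := by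
    have := irred_quad 2 (by norm_num)
    have e : (X ^ 2 + C (2 : ℚ) * X + 2 : ℚ[X]) = X ^ 2 + 2 * X + 2 := by
      rw [map_ofNat]
    rwa [e] at this
  have hB : Irreducible (X ^ 2 - 2 * X + 2 : ℚ[X]) := by
    have := irred_quad (-2) (by norm_num)
    have e : (X ^ 2 + C (-2 : ℚ) * X + 2 : ℚ[X]) = X ^ 2 - 2 * X + 2 := by
      rw [show (-2 : ℚ) = -(2 : ℚ) by norm_num, map_neg, map_ofNat]; ring
    rwa [e] at this
  have hfac : (X ^ 2 + 2 * X + 2 : ℚ[X]) * (X ^ 2 - 2 * X + 2) = X ^ 4 + 4 := by ring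
  have h8 : (C (1/8 : ℚ)) * 8 = 1 := by
    rw [show (8 : ℚ[X]) = C (8 : ℚ) from (map_ofNat C 8).symm, ← C_mul]; norm_num
  have hcopAB : IsCoprime (X ^ 2 + 2 * X + 2 : ℚ[X]) (X ^ 2 - 2 * X + 2) :=
    ⟨C (1/8 : ℚ) * (-X + 2), C (1/8 : ℚ) * (X + 2), by linear_combination h8⟩
  have h2C : (C (1/2 : ℚ)) * C 2 = 1 := by rw [← C_mul]; norm_num
  have h4C : (C (1/4 : ℚ)) * C 4 = 1 := by rw [← C_mul]; norm_num
  constructor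
  · rintro ⟨hd, hc⟩
    rw [← hfac] at hd
    rcases hA.isCoprime_or_dvd g with hA' | hA' <;> rcases hB.isCoprime_or_dvd g with hB' | hB'
    · -- coprime to both: g is a unit, contradiction
      exfalso
      have hu : IsUnit g := ((hA'.mul_left hB').symm).isUnit_of_dvd hd
      have := Polynomial.natDegree_eq_zero_of_isUnit hu
      omega
    · -- B ∣ g, coprime to A : g associated to B
      have hgB : g ∣ X ^ 2 - 2 * X + 2 := hA'.symm.dvd_of_dvd_mul_left hd
      obtain ⟨r, hr0, hgeq⟩ := assoc_case hgB hB'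
      subst hgeq
      simp only [eval_mul, eval_C, eval_add, eval_sub, eval_pow, eval_X, eval_ofNat] at hc
      have hr : (2 * r - 1) * (2 * r + 1) = 0 := by nlinarith [hc]
      rcases mul_eq_zero.mp hr with h | h
      · have : r = 1/2 := by linarith
        subst this
        exact Or.inr (Or.inr (Or.inl rfl))
      · have : r = -(1/2) := by linarith
        subst this
        refine Or.inr (Or.inr (Or.inr (Or.inl ?_)))
        rw [map_neg]; ring
    · -- A ∣ g, coprime to B
      have hgA : g ∣ X ^ 2 + 2 * X + 2 := by
        rw [mul_comm] at hd
        exact hB'.symm.dvd_of_dvd_mul_left hd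
      obtain ⟨r, hr0, hgeq⟩ := assoc_case hgA hA'
      subst hgeq
      simp only [eval_mul, eval_C, eval_add, eval_sub, eval_pow, eval_X, eval_ofNat] at hc
      have hr : (2 * r - 1) * (2 * r + 1) = 0 := by nlinarith [hc]
      rcases mul_eq_zero.mp hr with h | h
      · have : r = 1/2 := by linarith
        subst this
        exact Or.inl rfl
      · have : r = -(1/2) := by linarith
        subst this
        refine Or.inr (Or.inl ?_)
        rw [map_neg]; ring
    · -- both divide g
      have hABg : (X ^ 2 + 2 * X + 2 : ℚ[X]) * (X ^ 2 - 2 * X + 2) ∣ g :=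
        hcopAB.mul_dvd hA' hB'
      obtain ⟨r, hr0, hgeq⟩ := assoc_case hd hABg
      rw [hfac] at hgeq
      subst hgeq
      simp only [eval_mul, eval_C, eval_add, eval_pow, eval_X, eval_ofNat] at hc
      have hr : (4 * r - 1) * (4 * r + 1) = 0 := by nlinarith [hc]
      rcases mul_eq_zero.mp hr with h | h
      · have : r = 1/4 := by linarith
        subst this
        exact Or.inr (Or.inr (Or.inr (Or.inr (Or.inl rfl))))
      · have : r = -(1/4) := by linarith
        subst this
        refine Or.inr (Or.inr (Or.inr (Or.inr (Or.inr ?_))))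
        rw [map_neg]; ring
  · rintro (rfl | rfl | rfl | rfl | rfl | rfl) <;>
      refine ⟨?_, by simp⟩
    · exact ⟨C 2 * (X ^ 2 - 2 * X + 2), by
        linear_combination (-((X^2+2*X+2) * (X^2-2*X+2) : ℚ[X])) * h2C⟩
    · exact ⟨-(C 2 * (X ^ 2 - 2 * X + 2)), by
        linear_combination (-((X^2+2*X+2) * (X^2-2*X+2) : ℚ[X])) * h2C⟩
    · exact ⟨C 2 * (X ^ 2 + 2 * X + 2), by
        linear_combination (-((X^2+2*X+2) * (X^2-2*X+2) : ℚ[X])) * h2C⟩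
    · exact ⟨-(C 2 * (X ^ 2 + 2 * X + 2)), by
        linear_combination (-((X^2+2*X+2) * (X^2-2*X+2) : ℚ[X])) * h2C⟩
    · exact ⟨C 4, by linear_combination (-(X^4+4 : ℚ[X])) * h4C⟩
    · exact ⟨-(C 4), by linear_combination (-(X^4+4 : ℚ[X])) * h4C⟩
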